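/- Let d ≥ 1, let n = 2d, let σ ∈ ℂ with σ ≠ 0, and let P ∈ Mₙ(ℂ) be an idempotent matrix (P² = P) whose rank equals d. Then there exists an invertible matrix N ∈ Mₙ(ℂ) with N² = σ·I and N P N⁻¹ = I − P. -/

import Mathlib

open Matrix

/-- For every idempotent `P ∈ M_{2d}(ℂ)` of rank `d` and every `σ ≠ 0`
there exists an invertible `N` with `N² = σ·I` and `N P N⁻¹ = I − P`. -/
theorem stmt8 {d : ℕ} (hd : 1 ≤ d) (σ : ℂ) (hσ : σ ≠ 0)
    (P : Matrix (Fin (2 * d)) (Fin (2 * d)) ℂ)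
    (hP : P ^ 2 = P) (hrank : P.rank = d) :
    ∃ N : Matrix (Fin (2 * d)) (Fin (2 * d)) ℂ,
      IsUnit N ∧ N ^ 2 = σ • (1 : Matrix (Fin (2 * d)) (Fin (2 * d)) ℂ) ∧
      N * P * N⁻¹ = 1 - P := by
  classical
  obtain ⟨s, hs⟩ := IsAlgClosed.exists_pow_nat_eq σ (n := 2) (by norm_num)
  set f : (Fin (2 * d) → ℂ) →ₗ[ℂ] (Fin (2 * d) → ℂ) := Matrix.toLin' P with hfdef
  have hff : f ∘ₗ f = f := by
    rw [hfdef, ← Matrix.toLin'_mul, ← pow_two, hP]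
  have hfix : ∀ x ∈ LinearMap.range f, f x = x := by
    rintro x ⟨w, rfl⟩
    simpa using DFunLike.congr_fun hff w
  set p := LinearMap.range f with hpdef
  set q := LinearMap.ker f with hqdef
  have hrr : ∀ x : p, f.rangeRestrict x = x := fun x => Subtype.ext (hfix x x.2)
  have hcompl : IsCompl p q := by
    have := LinearMap.isCompl_of_proj hrr
    rwa [LinearMap.ker_rangeRestrict] at this
  have hdim_p : Module.finrank ℂ p = d := hrank
  have hdim_V : Module.finrank ℂ (Fin (2 * d) → ℂ) = 2 * d := by
    simp [Module.finrank_pi]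
  have hdim_q : Module.finrank ℂ q = d := by
    have h1 := LinearMap.finrank_range_add_finrank_ker f
    rw [← hpdef, ← hqdef, hdim_p, hdim_V] at h1
    omega
  let φ : p ≃ₗ[ℂ] q := LinearEquiv.ofFinrankEq _ _ (hdim_p.trans hdim_q.symm)
  set π : (Fin (2 * d) → ℂ) →ₗ[ℂ] p := p.projectionOnto q hcompl with hπdef
  set ρ : (Fin (2 * d) → ℂ) →ₗ[ℂ] q := q.projectionOnto p hcompl.symm with hρdef
  set g : (Fin (2 * d) → ℂ) →ₗ[ℂ] (Fin (2 * d) → ℂ) :=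
    s • (p.subtype ∘ₗ (φ.symm : q →ₗ[ℂ] p) ∘ₗ ρ + q.subtype ∘ₗ (φ : p →ₗ[ℂ] q) ∘ₗ π)
    with hgdef
  have hg_apply : ∀ v : Fin (2 * d) → ℂ, g v = s • (((φ.symm (ρ v) : p) : Fin (2 * d) → ℂ) + ((φ (π v) : q) : Fin (2 * d) → ℂ)) := by
    intro v
    rw [hgdef]
    simp only [LinearMap.smul_apply, LinearMap.add_apply, LinearMap.comp_apply,
      Submodule.subtype_apply, LinearEquiv.coe_coe]
  have hdecomp : ∀ v : Fin (2 * d) → ℂ, ((π v : Fin (2 * d) → ℂ) + (ρ v : Fin (2 * d) → ℂ)) = v := fun v =>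
    Submodule.projection_add_projection_eq_self hcompl v
  have hπg : ∀ v : Fin (2 * d) → ℂ, π (g v) = s • φ.symm (ρ v) := by
    intro v
    rw [hg_apply, _root_.map_smul, _root_.map_add]
    rw [Submodule.projectionOnto_apply_left hcompl,
      Submodule.projectionOnto_apply_of_mem_right hcompl (φ (π v)).2]
    simp
  have hρg : ∀ v : Fin (2 * d) → ℂ, ρ (g v) = s • φ (π v) := by
    intro v
    rw [hg_apply, _root_.map_smul, _root_.map_add]
    rw [Submodule.projectionOnto_apply_left hcompl.symm,
      Submodule.projectionOnto_apply_of_mem_right hcompl.symm (φ.symm (ρ v)).2]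
    simp
  have hfπ : ∀ v : Fin (2 * d) → ℂ, f v = ((π v : p) : Fin (2 * d) → ℂ) := by
    intro v
    conv_lhs => rw [← hdecomp v]
    rw [_root_.map_add, hfix _ (π v).2, (by exact (ρ v).2 : f ((ρ v : Fin (2 * d) → ℂ)) = 0), add_zero]
  have hgg : g ∘ₗ g = σ • LinearMap.id := by
    apply LinearMap.ext
    intro v
    rw [LinearMap.comp_apply, hg_apply, hπg, hρg, _root_.map_smul, _root_.map_smul,
      LinearEquiv.symm_apply_apply, LinearEquiv.apply_symm_apply, LinearMap.smul_apply,
      LinearMap.id_apply]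
    rw [SetLike.val_smul, SetLike.val_smul, ← smul_add, hdecomp v, smul_smul, ← sq, hs]
  have hgf : g ∘ₗ f = (LinearMap.id - f) ∘ₗ g := by
    apply LinearMap.ext
    intro v
    rw [LinearMap.comp_apply, LinearMap.comp_apply, LinearMap.sub_apply, LinearMap.id_apply]
    rw [hfπ (g v), hπg]
    rw [hg_apply (f v)]
    have hρf : ρ (f v) = 0 := by
      rw [hfπ v]
      exact Submodule.projectionOnto_apply_of_mem_right hcompl.symm (π v).2
    have hπf : π (f v) = π v := by
      rw [hfπ v]
      exact Submodule.projectionOnto_apply_left hcompl (π v)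
    rw [hρf, hπf, hg_apply v, φ.symm.map_zero]
    rw [SetLike.val_smul, ZeroMemClass.coe_zero, zero_add, smul_add, add_sub_cancel_left]
  set N : Matrix (Fin (2 * d)) (Fin (2 * d)) ℂ := LinearMap.toMatrix' g with hNdef
  have hPN : LinearMap.toMatrix' f = P := LinearMap.toMatrix'_toLin' P
  have hN2 : N * N = σ • (1 : Matrix (Fin (2 * d)) (Fin (2 * d)) ℂ) := by
    rw [hNdef, ← LinearMap.toMatrix'_comp, hgg, _root_.map_smul, LinearMap.toMatrix'_id]
  have hNu : IsUnit N := by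
    have hdet : N.det * N.det = σ ^ (2 * d) := by
      rw [← Matrix.det_mul, hN2, Matrix.det_smul, Matrix.det_one, mul_one, Fintype.card_fin]
    rw [Matrix.isUnit_iff_isUnit_det, isUnit_iff_ne_zero]
    intro h
    rw [h, mul_zero] at hdet
    exact pow_ne_zero _ hσ hdet.symm
  have hNP : N * P = (1 - P) * N := by
    rw [hNdef, ← hPN, ← LinearMap.toMatrix'_comp, hgf, LinearMap.toMatrix'_comp,
      _root_.map_sub, LinearMap.toMatrix'_id]
  refine ⟨N, hNu, by rw [pow_two, hN2], ?_⟩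
  rw [hNP, Matrix.mul_assoc, Matrix.mul_nonsing_inv N ((Matrix.isUnit_iff_isUnit_det N).mp hNu),
    Matrix.mul_one]
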